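/- For every dimension d ≥ 1 there exists K > 0 such that for every multi-index α ∈ ℕ^d and every y ∈ ℝ^d ∖ {0}, the α-th partial derivative of the function y ↦ |y|^{-1} (Euclidean norm) satisfies |∂^α(|·|^{-1})(y)| ≤ K^{|α|+1} · (α!) · |y|^{-|α|-1}. -/

import Mathlib

open scoped Nat

/-- Partial derivative in the `j`-th coordinate direction. -/
noncomputable def pd {d : ℕ} {A : Type*} [NormedAddCommGroup A] [NormedSpace ℝ A]
    (j : Fin d) (f : EuclideanSpace ℝ (Fin d) → A) : EuclideanSpace ℝ (Fin d) → A :=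
  fun y => fderiv ℝ f y (EuclideanSpace.single j 1)

/-- Iterated partial derivative `∂^α = ∂₁^{α₁} ⋯ ∂_d^{α_d}`. -/
noncomputable def mpd {d : ℕ} {A : Type*} [NormedAddCommGroup A] [NormedSpace ℝ A]
    (α : Fin d → ℕ) (f : EuclideanSpace ℝ (Fin d) → A) : EuclideanSpace ℝ (Fin d) → A :=
  (List.finRange d).foldr (fun j g => (pd j)^[α j] g) f

namespace Stmt1Aux

open scoped ENNReal NNReal

/-! ### Combinatorial lemmas -/

lemma choose_mul_pow_le {n j : ℕ} (k : ℕ) (h : j ≤ n) : n.choose j * k ^ j ≤ (k + 1) ^ n := by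
  have h1 : k ^ j * 1 ^ (n - j) * n.choose j ≤
      ∑ m ∈ Finset.range (n + 1), k ^ m * 1 ^ (n - m) * n.choose m := by
    refine Finset.single_le_sum (f := fun m => k ^ m * 1 ^ (n - m) * n.choose m)
      (fun i _ => Nat.zero_le _) ?_
    simpa using Nat.lt_succ_of_le h
  calc n.choose j * k ^ j = k ^ j * 1 ^ (n - j) * n.choose j := by ring
    _ ≤ ∑ m ∈ Finset.range (n + 1), k ^ m * 1 ^ (n - m) * n.choose m := h1
    _ = (k + 1) ^ n := (add_pow k 1 n).symm

lemma factorial_sum_le {ι : Type*} [DecidableEq ι] (s : Finset ι) (f : ι → ℕ) :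
    (∑ i ∈ s, f i)! ≤ s.card ^ (∑ i ∈ s, f i) * ∏ i ∈ s, (f i)! := by
  induction s using Finset.induction_on with
  | empty => simp
  | @insert a s ha ih =>
    rw [Finset.sum_insert ha, Finset.prod_insert ha, Finset.card_insert_of_notMem ha]
    set m := ∑ i ∈ s, f i with hm
    have h1 : (f a + m).choose m * m ! * (f a)! = (f a + m)! := by
      have := Nat.choose_mul_factorial_mul_factorial (Nat.le_add_left m (f a))
      simpa [Nat.add_sub_cancel] using this
    have h2 : (f a + m).choose m * s.card ^ m ≤ (s.card + 1) ^ (f a + m) :=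
      choose_mul_pow_le s.card (Nat.le_add_left m (f a))
    calc (f a + m)! = (f a + m).choose m * m ! * (f a)! := h1.symm
      _ ≤ (f a + m).choose m * (s.card ^ m * ∏ i ∈ s, (f i)!) * (f a)! := by
          exact Nat.mul_le_mul_right _ (Nat.mul_le_mul_left _ ih)
      _ = ((f a + m).choose m * s.card ^ m) * ((∏ i ∈ s, (f i)!) * (f a)!) := by ring
      _ ≤ (s.card + 1) ^ (f a + m) * ((∏ i ∈ s, (f i)!) * (f a)!) :=
          Nat.mul_le_mul_right _ h2
      _ = (s.card + 1) ^ (f a + m) * ((f a)! * ∏ i ∈ s, (f i)!) := by ring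

/-! ### derivSeries norm bound -/

variable {𝕜 : Type*} [NontriviallyNormedField 𝕜] {E : Type*} [NormedAddCommGroup E]
  [NormedSpace 𝕜 E] {F : Type*} [NormedAddCommGroup F] [NormedSpace 𝕜 F]

lemma norm_changeOriginSeries_one_le (p : FormalMultilinearSeries 𝕜 E F) (m : ℕ) :
    ‖p.changeOriginSeries 1 m‖ ≤ (m + 1 : ℝ) * ‖p (m + 1)‖ := by
  have hcard : Fintype.card { s : Finset (Fin (1 + m)) // s.card = m } = m + 1 := by
    rw [Fintype.card_finset_len, Fintype.card_fin, Nat.add_comm 1 m, Nat.choose_succ_self_right]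
  have h2 : ‖p (1 + m)‖ = ‖p (m + 1)‖ := congrArg (fun k => ‖p k‖) (Nat.add_comm 1 m)
  have h1 : ‖p.changeOriginSeries 1 m‖₊ ≤ (m + 1) • ‖p (1 + m)‖₊ := by
    refine (p.nnnorm_changeOriginSeries_le_tsum 1 m).trans_eq ?_
    rw [tsum_fintype, Finset.sum_const, Finset.card_univ, hcard]
  have h1' : ‖p.changeOriginSeries 1 m‖ ≤ (m + 1 : ℝ) * ‖p (1 + m)‖ := by
    rw [nsmul_eq_mul] at h1
    have := (NNReal.coe_le_coe).2 h1
    push_cast at this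
    simpa using this
  rw [h2] at h1'
  exact h1' 

lemma norm_derivSeries_le (p : FormalMultilinearSeries 𝕜 E F) (m : ℕ) :
    ‖p.derivSeries m‖ ≤ (m + 1 : ℝ) * ‖p (m + 1)‖ := by
  rw [FormalMultilinearSeries.derivSeries, ContinuousLinearMap.compFormalMultilinearSeries_apply]
  refine (ContinuousLinearMap.norm_compContinuousMultilinearMap_le _ _).trans ?_
  have hc : ‖(continuousMultilinearCurryFin1 𝕜 E F :
      (E [×1]→L[𝕜] F) →L[𝕜] E →L[𝕜] F)‖ ≤ 1 :=
    ContinuousLinearMap.opNorm_le_bound _ zero_le_one (by simp)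
  have h2 := norm_changeOriginSeries_one_le p m
  calc ‖(continuousMultilinearCurryFin1 𝕜 E F :
        (E [×1]→L[𝕜] F) →L[𝕜] E →L[𝕜] F)‖ * ‖p.changeOriginSeries 1 m‖
      ≤ 1 * ((m + 1 : ℝ) * ‖p (m + 1)‖) :=
        mul_le_mul hc h2 (by positivity) zero_le_one
    _ = (m + 1 : ℝ) * ‖p (m + 1)‖ := one_mul _


/-! ### Iterated directional derivatives along a list of directions -/

noncomputable def mpdL {d : ℕ} (L : List (EuclideanSpace ℝ (Fin d)))
    (g : EuclideanSpace ℝ (Fin d) → ℝ) : EuclideanSpace ℝ (Fin d) → ℝ :=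
  L.foldr (fun v h => fun y => fderiv ℝ h y v) g

variable {d : ℕ}

lemma mpdL_nil (g : EuclideanSpace ℝ (Fin d) → ℝ) : mpdL [] g = g := rfl

lemma mpdL_cons (v : EuclideanSpace ℝ (Fin d)) (L : List (EuclideanSpace ℝ (Fin d)))
    (g : EuclideanSpace ℝ (Fin d) → ℝ) :
    mpdL (v :: L) g = fun y => fderiv ℝ (mpdL L g) y v := rfl

lemma mpdL_append (L₁ L₂ : List (EuclideanSpace ℝ (Fin d)))
    (g : EuclideanSpace ℝ (Fin d) → ℝ) :
    mpdL (L₁ ++ L₂) g = mpdL L₁ (mpdL L₂ g) := List.foldr_append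

lemma pd_iterate_eq (j : Fin d) (k : ℕ) (g : EuclideanSpace ℝ (Fin d) → ℝ) :
    (pd j)^[k] g = mpdL (List.replicate k (EuclideanSpace.single j 1)) g := by
  induction k with
  | zero => rfl
  | succ k ih =>
    rw [Function.iterate_succ_apply', ih]
    rfl

lemma mpd_eq_mpdL (α : Fin d → ℕ) (f : EuclideanSpace ℝ (Fin d) → ℝ) :
    mpd α f = mpdL ((List.finRange d).flatMap
      (fun j => List.replicate (α j) (EuclideanSpace.single j 1))) f := by
  rw [mpd]
  induction (List.finRange d) with
  | nil => rfl
  | cons j js ih =>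
    rw [List.foldr_cons, ih, List.flatMap_cons, mpdL_append, pd_iterate_eq]

/-! ### The key series propagation lemma -/

lemma main_prop {x : EuclideanSpace ℝ (Fin d)} {r : ℝ≥0∞} :
    ∀ (L : List (EuclideanSpace ℝ (Fin d))), (∀ v ∈ L, ‖v‖ ≤ 1) →
      ∀ (g : EuclideanSpace ℝ (Fin d) → ℝ)
        (q : FormalMultilinearSeries ℝ (EuclideanSpace ℝ (Fin d)) ℝ),
      HasFPowerSeriesOnBall g q x r →
      ∃ q' : FormalMultilinearSeries ℝ (EuclideanSpace ℝ (Fin d)) ℝ,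
        HasFPowerSeriesOnBall (mpdL L g) q' x r ∧
        ∀ m : ℕ, ‖q' m‖ * (m ! : ℝ) ≤ ‖q (m + L.length)‖ * ((m + L.length)! : ℝ)
  | [], _, g, q, h => ⟨q, h, fun m => by simp⟩
  | v :: L, hL, g, q, h => by
    obtain ⟨q', h1, h2⟩ := main_prop L (fun w hw => hL w (List.mem_cons_of_mem _ hw)) g q h
    have hv : ‖v‖ ≤ 1 := hL v List.mem_cons_self
    set A : (EuclideanSpace ℝ (Fin d) →L[ℝ] ℝ) →L[ℝ] ℝ := ContinuousLinearMap.apply ℝ ℝ v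
    have hA : ‖A‖ ≤ 1 := by
      refine ContinuousLinearMap.opNorm_le_bound _ zero_le_one fun T => ?_
      rw [ContinuousLinearMap.apply_apply, one_mul]
      calc ‖T v‖ ≤ ‖T‖ * ‖v‖ := T.le_opNorm v
        _ ≤ ‖T‖ * 1 := by gcongr
        _ = ‖T‖ := mul_one _
    have hser := A.comp_hasFPowerSeriesOnBall h1.fderiv
    have heq : ⇑A ∘ fderiv ℝ (mpdL L g) = mpdL (v :: L) g := by
      funext y
      simp [mpdL_cons, Function.comp, A, ContinuousLinearMap.apply_apply]
    rw [heq] at hser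
    refine ⟨_, hser, fun m => ?_⟩
    have e1 : ‖(A.compFormalMultilinearSeries q'.derivSeries) m‖ ≤
        (m + 1 : ℝ) * ‖q' (m + 1)‖ := by
      rw [ContinuousLinearMap.compFormalMultilinearSeries_apply]
      refine (ContinuousLinearMap.norm_compContinuousMultilinearMap_le _ _).trans ?_
      calc ‖A‖ * ‖q'.derivSeries m‖ ≤ 1 * ((m + 1 : ℝ) * ‖q' (m + 1)‖) :=
            mul_le_mul hA (norm_derivSeries_le q' m) (by positivity) zero_le_one
        _ = (m + 1 : ℝ) * ‖q' (m + 1)‖ := one_mul _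
    have e2 := h2 (m + 1)
    have hidx : m + 1 + L.length = m + (v :: L).length := by simp; omega
    rw [hidx] at e2
    have hfac : ((m + 1)! : ℝ) = (m + 1 : ℝ) * (m ! : ℝ) := by
      rw [Nat.factorial_succ]; push_cast; ring
    calc ‖(A.compFormalMultilinearSeries q'.derivSeries) m‖ * (m ! : ℝ)
        ≤ ((m + 1 : ℝ) * ‖q' (m + 1)‖) * (m ! : ℝ) := by
          exact mul_le_mul_of_nonneg_right e1 (by positivity)
      _ = ‖q' (m + 1)‖ * ((m + 1)! : ℝ) := by rw [hfac]; ring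
      _ ≤ ‖q (m + (v :: L).length)‖ * ((m + (v :: L).length)! : ℝ) := e2


/-! ### Analyticity of the inverse norm -/

lemma norm_sq_eq (y : EuclideanSpace ℝ (Fin d)) : ‖y‖ ^ 2 = ∑ i, (y i) ^ 2 := by
  rw [EuclideanSpace.norm_eq, Real.sq_sqrt (by positivity)]
  simp [Real.norm_eq_abs, sq_abs]

lemma analyticAt_log_pos {t : ℝ} (ht : 0 < t) : AnalyticAt ℝ Real.log t := by
  have hmem : (t : ℂ) ∈ Complex.slitPlane := Complex.ofReal_mem_slitPlane.2 ht
  have h1 : AnalyticAt ℝ (fun s : ℝ => (Complex.log (s : ℂ)).re) t := by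
    have hc : AnalyticAt ℝ (⇑Complex.reCLM ∘ (Complex.log ∘ ⇑Complex.ofRealCLM)) t :=
      (Complex.reCLM.analyticAt _).comp
        (((analyticAt_clog hmem).restrictScalars).comp (Complex.ofRealCLM.analyticAt t))
    simpa [Function.comp_def] using hc
  refine h1.congr ?_
  filter_upwards [eventually_gt_nhds ht] with s hs
  rw [← Complex.ofReal_log hs.le, Complex.ofReal_re]

lemma analyticAt_inv_norm {x : EuclideanSpace ℝ (Fin d)} (hx : x ≠ 0) :
    AnalyticAt ℝ (fun t : EuclideanSpace ℝ (Fin d) => ‖t‖⁻¹) x := by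
  set S : EuclideanSpace ℝ (Fin d) → ℝ := fun y => ∑ i, (y i) ^ 2 with hS
  have hSanalytic : AnalyticAt ℝ S x := by
    refine Finset.analyticAt_fun_sum _ fun i _ => ?_
    have := ((EuclideanSpace.proj (𝕜 := ℝ) i).analyticAt x).pow 2
    exact this
  have hSval : ∀ y, S y = ‖y‖ ^ 2 := fun y => (norm_sq_eq y).symm
  have hSpos : 0 < S x := by
    rw [hSval]
    have : 0 < ‖x‖ := norm_pos_iff.2 hx
    positivity
  have hexp : AnalyticAt ℝ (fun y => Real.exp (Real.log (S y) * (-2⁻¹ : ℝ))) x := by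
    refine analyticAt_rexp.comp ?_
    exact ((analyticAt_log_pos hSpos).comp hSanalytic).mul analyticAt_const
  refine hexp.congr ?_
  have hev : ∀ᶠ y in nhds x, 0 < S y :=
    (hSanalytic.continuousAt).eventually (eventually_gt_nhds hSpos)
  filter_upwards [hev] with y hy
  have hny : 0 < ‖y‖ := by
    rcases eq_or_ne y 0 with h | h
    · rw [hSval, h] at hy; simp at hy
    · exact norm_pos_iff.2 h
  rw [← Real.rpow_def_of_pos hy, hSval y]
  rw [← Real.rpow_natCast ‖y‖ 2, ← Real.rpow_mul (norm_nonneg y)]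
  norm_num
  exact Real.rpow_neg_one _

end Stmt1Aux


open scoped NNReal ENNReal
open Stmt1Aux

set_option maxHeartbeats 2000000

/-- For every dimension `d ≥ 1` there exists `K > 0` such that for every multi-index `α`
and every `y ≠ 0`, `|∂^α(|·|⁻¹)(y)| ≤ K^(|α|+1) · α! · |y|^(-|α|-1)`. -/
theorem stmt_1 (d : ℕ) (hd : 1 ≤ d) :
    ∃ K > (0 : ℝ), ∀ (α : Fin d → ℕ) (y : EuclideanSpace ℝ (Fin d)), y ≠ 0 →
      |mpd α (fun t => ‖t‖⁻¹) y| ≤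
        K ^ (∑ i, α i + 1) * (∏ i, ((α i)! : ℝ)) * ‖y‖ ^ (-(∑ i, α i : ℤ) - 1) := by
  classical
  set i0 : Fin d := ⟨0, hd⟩ with hi0
  set x₀ : EuclideanSpace ℝ (Fin d) := EuclideanSpace.single i0 1 with hx₀def
  have hx₀norm : ‖x₀‖ = 1 := by simp [hx₀def, EuclideanSpace.norm_single]
  have hx₀ne : x₀ ≠ 0 := by
    intro h; rw [h] at hx₀norm; simp at hx₀norm
  obtain ⟨p, hp⟩ := analyticAt_inv_norm hx₀ne
  obtain ⟨r0, hb0⟩ := hp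
  obtain ⟨ε, hε0, hεr0⟩ := ENNReal.lt_iff_exists_nnreal_btwn.1 hb0.r_pos
  have hεpos : 0 < ε := ENNReal.coe_pos.1 hε0
  have hεposR : (0:ℝ) < (ε:ℝ) := hεpos
  have hball : HasFPowerSeriesOnBall (fun t : EuclideanSpace ℝ (Fin d) => ‖t‖⁻¹) p x₀ ε :=
    hb0.mono hε0 hεr0.le
  set ρ : ℝ≥0 := ε / 2 with hρdef
  set R : ℝ := (ε:ℝ) / 2 with hRdef
  have hRρ : (ρ:ℝ) = R := by rw [hρdef, hRdef]; push_cast; ring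
  have hR0 : 0 < R := by rw [hRdef]; positivity
  have hρε : ρ < ε := half_lt_self hεpos
  have hRε : R < (ε:ℝ) := by rw [hRdef]; linarith
  have hρrad : (ρ : ℝ≥0∞) < p.radius :=
    lt_of_lt_of_le (ENNReal.coe_lt_coe.2 hρε) hball.r_le
  obtain ⟨C, hC0, hC⟩ := p.norm_mul_pow_le_of_lt_radius hρrad
  have hd' : (1:ℝ) ≤ (d:ℝ) := by exact_mod_cast hd
  set K : ℝ := (C + 1) * (d:ℝ) * (1 + R⁻¹) with hKdef
  have hRinv0 : 0 < R⁻¹ := inv_pos.2 hR0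
  have hdpos : (0:ℝ) < (d:ℝ) := by linarith
  have hK0 : 0 < K := by
    rw [hKdef]
    have h1 : (0:ℝ) < C + 1 := by linarith
    have h2 : (0:ℝ) < 1 + R⁻¹ := by linarith
    exact mul_pos (mul_pos h1 hdpos) h2
  refine ⟨K, hK0, ?_⟩
  intro α y hy
  set n : ℕ := ∑ i, α i with hn
  set c : ℝ := ‖y‖ with hcdef
  have hc : 0 < c := norm_pos_iff.2 hy
  set u : EuclideanSpace ℝ (Fin d) := c⁻¹ • y with hudef
  have hu : ‖u‖ = 1 := by
    rw [hudef, norm_smul, Real.norm_eq_abs, abs_of_pos (inv_pos.2 hc), ← hcdef,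
      inv_mul_cancel₀ hc.ne']
  have hortho : Orthonormal ℝ (Set.restrict {i0} (fun _ : Fin d => u)) := by
    constructor
    · intro i; exact hu
    · intro i j hij
      exact absurd (Subtype.ext ((Set.mem_singleton_iff.1 i.2).trans
        (Set.mem_singleton_iff.1 j.2).symm)) hij
  obtain ⟨b, hb⟩ := hortho.exists_orthonormalBasis_extension_of_card_eq
    (by simp [finrank_euclideanSpace_fin])
  have hbu : b i0 = u := hb i0 rfl
  set O := b.repr.symm with hOdef
  have hOx₀ : O x₀ = u := by
    rw [hx₀def, hOdef]
    exact (b.repr_symm_single i0).trans hbu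
  clear_value O
  set Tinv : EuclideanSpace ℝ (Fin d) →L[ℝ] EuclideanSpace ℝ (Fin d) :=
    c⁻¹ • (O.symm.toLinearIsometry.toContinuousLinearMap) with hTdef
  have hTinvz : ∀ z, Tinv z = c⁻¹ • O.symm z := by
    intro z; rw [hTdef]; rfl
  have hTnorm : ∀ z, ‖Tinv z‖ = c⁻¹ * ‖z‖ := by
    intro z
    rw [hTinvz, norm_smul, Real.norm_eq_abs, abs_of_pos (inv_pos.2 hc),
      LinearIsometryEquiv.norm_map]
  have hTinv_le : ‖Tinv‖ ≤ c⁻¹ :=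
    ContinuousLinearMap.opNorm_le_bound _ (by positivity) fun z => le_of_eq (hTnorm z)
  clear_value Tinv
  set qy : FormalMultilinearSeries ℝ (EuclideanSpace ℝ (Fin d)) ℝ :=
    fun m => c⁻¹ • ((p m).compContinuousLinearMap fun _ => Tinv) with hqydef
  have hqm : ∀ m, qy m = c⁻¹ • ((p m).compContinuousLinearMap fun _ => Tinv) := fun _ => rfl
  clear_value qy
  have hqy : ∀ m, ‖qy m‖ ≤ c⁻¹ * (‖p m‖ * (c⁻¹) ^ m) := by
    intro m
    have h1 : ‖(p m).compContinuousLinearMap (fun _ => Tinv)‖ ≤ ‖p m‖ * (c⁻¹) ^ m := by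
      refine (ContinuousMultilinearMap.norm_compContinuousLinearMap_le _ _).trans ?_
      rw [Finset.prod_const, Finset.card_univ, Fintype.card_fin]
      exact mul_le_mul_of_nonneg_left (pow_le_pow_left₀ (norm_nonneg _) hTinv_le m)
        (norm_nonneg _)
    have h2 := hqm m
    calc ‖qy m‖ = ‖c⁻¹ • ((p m).compContinuousLinearMap fun _ => Tinv)‖ := by rw [h2]
      _ ≤ ‖(c⁻¹:ℝ)‖ * ‖(p m).compContinuousLinearMap fun _ => Tinv‖ :=
          ContinuousMultilinearMap.opNorm_smul_le _ _
      _ = c⁻¹ * ‖(p m).compContinuousLinearMap fun _ => Tinv‖ := by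
          rw [Real.norm_eq_abs, abs_of_pos (inv_pos.2 hc)]
      _ ≤ c⁻¹ * (‖p m‖ * (c⁻¹) ^ m) := mul_le_mul_of_nonneg_left h1 (by positivity)
  have hyball : HasFPowerSeriesOnBall (fun t : EuclideanSpace ℝ (Fin d) => ‖t‖⁻¹) qy y
      ((‖y‖₊ * ρ : ℝ≥0) : ℝ≥0∞) := by
    have hcoe : ((‖y‖₊ * ρ : ℝ≥0) : ℝ) = c * R := by
      rw [NNReal.coe_mul, coe_nnnorm, hRρ, hcdef]
    refine ⟨?_, ?_, ?_⟩
    · refine FormalMultilinearSeries.le_radius_of_bound _ (c⁻¹ * C) fun m => ?_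
      rw [hcoe]
      have hpow : (c⁻¹:ℝ) ^ m * (c * R) ^ m = R ^ m := by
        rw [← mul_pow, ← mul_assoc, inv_mul_cancel₀ hc.ne', one_mul]
      have hCm : ‖p m‖ * R ^ m ≤ C := by rw [← hRρ]; exact hC m
      calc ‖qy m‖ * (c * R) ^ m ≤ (c⁻¹ * (‖p m‖ * (c⁻¹) ^ m)) * (c * R) ^ m := by
            have := hqy m
            gcongr
        _ = c⁻¹ * (‖p m‖ * ((c⁻¹) ^ m * (c * R) ^ m)) := by ring
        _ = c⁻¹ * (‖p m‖ * R ^ m) := by rw [hpow]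
        _ ≤ c⁻¹ * C := by gcongr
    · exact ENNReal.coe_pos.2 (mul_pos (nnnorm_pos.2 hy) (by
        have : (0:ℝ) < (ρ:ℝ) := by rw [hRρ]; exact hR0
        exact_mod_cast this))
    · intro z hz
      have hz' : ‖z‖ < c * R := by
        rw [mem_emetric_ball_zero_iff] at hz
        have := ENNReal.coe_lt_coe.1 hz
        have := NNReal.coe_lt_coe.2 this
        rwa [coe_nnnorm, hcoe] at this
      have hmem : Tinv z ∈ Metric.eball (0 : EuclideanSpace ℝ (Fin d)) (ε : ℝ≥0∞) := by
        rw [mem_emetric_ball_zero_iff]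
        have h1 : ‖Tinv z‖ < (ε:ℝ) := by
          rw [hTnorm]
          calc c⁻¹ * ‖z‖ < c⁻¹ * (c * R) := by
                exact mul_lt_mul_of_pos_left hz' (inv_pos.2 hc)
            _ = R := by rw [← mul_assoc, inv_mul_cancel₀ hc.ne', one_mul]
            _ < (ε:ℝ) := hRε
        exact_mod_cast h1
      have hsum := hball.hasSum hmem
      have happ : (fun m => qy m fun _ => z) =
          fun m => c⁻¹ * (p m fun _ => Tinv z) := by
        funext m
        rw [hqm m]
        simp [ContinuousMultilinearMap.smul_apply,
          ContinuousMultilinearMap.compContinuousLinearMap_apply, smul_eq_mul]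
      have hyz : y + z = c • O (x₀ + Tinv z) := by
        rw [map_add, smul_add, hOx₀, hudef, smul_inv_smul₀ hc.ne', hTinvz,
          LinearIsometryEquiv.map_smul, LinearIsometryEquiv.apply_symm_apply,
          smul_inv_smul₀ hc.ne']
      have hval : ‖y + z‖⁻¹ = c⁻¹ * ‖x₀ + Tinv z‖⁻¹ := by
        rw [hyz, norm_smul, Real.norm_eq_abs, abs_of_pos hc,
          LinearIsometryEquiv.norm_map, mul_inv]
      rw [happ]
      show HasSum _ ‖y + z‖⁻¹
      rw [hval]
      exact hsum.mul_left c⁻¹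
  set L : List (EuclideanSpace ℝ (Fin d)) := (List.finRange d).flatMap
    (fun j => List.replicate (α j) (EuclideanSpace.single j 1)) with hLdef
  have hlen : L.length = n := by
    rw [hLdef, List.length_flatMap]
    simp only [Function.comp_def, List.length_replicate]
    exact (Fin.sum_univ_def α).symm
  have hLnorm : ∀ v ∈ L, ‖v‖ ≤ 1 := by
    intro v hv
    rw [hLdef, List.mem_flatMap] at hv
    obtain ⟨j, -, hj⟩ := hv
    rw [List.eq_of_mem_replicate hj]
    simp [EuclideanSpace.norm_single]
  obtain ⟨q', hq'b, hq'bound⟩ := main_prop L hLnorm _ qy hyball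
  have hval0 : |mpdL L (fun t : EuclideanSpace ℝ (Fin d) => ‖t‖⁻¹) y| ≤ ‖q' 0‖ := by
    have e := hq'b.coeff_zero (fun _ => 0)
    rw [← e, ← Real.norm_eq_abs]
    refine (ContinuousMultilinearMap.le_opNorm _ _).trans ?_
    simp
  have bound0 : ‖q' 0‖ ≤ ‖qy n‖ * (n ! : ℝ) := by
    have h := hq'bound 0
    rw [Nat.zero_add, hlen] at h
    simpa using h
  have hpn : ‖p n‖ ≤ C * (R⁻¹) ^ n := by
    have hCn : ‖p n‖ * R ^ n ≤ C := by rw [← hRρ]; exact hC n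
    rw [inv_pow, ← div_eq_mul_inv]
    exact (le_div_iff₀ (pow_pos hR0 n)).2 hCn
  have hfac : (n ! : ℝ) ≤ (d:ℝ) ^ n * ∏ i, ((α i)! : ℝ) := by
    have h1 := factorial_sum_le (Finset.univ : Finset (Fin d)) α
    rw [Finset.card_univ, Fintype.card_fin] at h1
    exact_mod_cast h1
  have hone : (1:ℝ) ≤ (d:ℝ) * (1 + R⁻¹) := by nlinarith
  have hK1 : C ≤ K := by
    calc C ≤ (C + 1) * 1 := by linarith
      _ ≤ (C + 1) * ((d:ℝ) * (1 + R⁻¹)) := by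
          exact mul_le_mul_of_nonneg_left hone (by linarith)
      _ = K := by rw [hKdef]; ring
  have hK2 : (d:ℝ) * R⁻¹ ≤ K := by
    calc (d:ℝ) * R⁻¹ ≤ (d:ℝ) * (1 + R⁻¹) := by
          exact mul_le_mul_of_nonneg_left (by linarith) (by linarith)
      _ = 1 * ((d:ℝ) * (1 + R⁻¹)) := by ring
      _ ≤ (C + 1) * ((d:ℝ) * (1 + R⁻¹)) := by
          exact mul_le_mul_of_nonneg_right (by linarith) (by nlinarith)
      _ = K := by rw [hKdef]; ring
  have hzpow : c ^ (-(n:ℤ) - 1) = (c⁻¹) ^ (n + 1) := by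
    rw [show (-(n:ℤ) - 1) = -((n + 1 : ℕ) : ℤ) by push_cast; ring,
      zpow_neg, zpow_natCast, inv_pow]
  have hprodnn : (0:ℝ) ≤ ∏ i, ((α i)! : ℝ) := by positivity
  calc |mpd α (fun t : EuclideanSpace ℝ (Fin d) => ‖t‖⁻¹) y|
      = |mpdL L (fun t : EuclideanSpace ℝ (Fin d) => ‖t‖⁻¹) y| := by
        rw [mpd_eq_mpdL, hLdef]
    _ ≤ ‖q' 0‖ := hval0
    _ ≤ ‖qy n‖ * (n ! : ℝ) := bound0
    _ ≤ (c⁻¹ * (‖p n‖ * (c⁻¹) ^ n)) * (n ! : ℝ) := by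
        have := hqy n; gcongr
    _ ≤ (c⁻¹ * ((C * (R⁻¹) ^ n) * (c⁻¹) ^ n)) * (n ! : ℝ) := by gcongr
    _ ≤ (c⁻¹ * ((C * (R⁻¹) ^ n) * (c⁻¹) ^ n)) * ((d:ℝ) ^ n * ∏ i, ((α i)! : ℝ)) := by
        gcongr
    _ = (C * ((d:ℝ) * R⁻¹) ^ n) * (∏ i, ((α i)! : ℝ)) * (c⁻¹) ^ (n + 1) := by
        ring
    _ ≤ (K * K ^ n) * (∏ i, ((α i)! : ℝ)) * (c⁻¹) ^ (n + 1) := by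
        gcongr
    _ = K ^ (n + 1) * (∏ i, ((α i)! : ℝ)) * c ^ (-(n:ℤ) - 1) := by
        rw [hzpow, pow_succ]; ring
    _ = K ^ (n + 1) * (∏ i, ((α i)! : ℝ)) * c ^ (-(∑ i, (α i : ℤ)) - 1) := by
        congr 1
        rw [hn]
        push_cast
        ring
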